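/- Let Γ be a linearly ordered cancellative additive commutative monoid in which addition is strictly monotone, and let R be an abelian semi-regular ring with J(R) nilpotent. Then the generalized power series ring R[[Γ]] (the Hahn series ring over Γ with coefficients in R) is left McCoy over R: whenever f, g are non-zero elements of R[[Γ]] with f g = 0, there exists a non-zero element c ∈ R such that c · g(s) = 0 for every s ∈ Γ (equivalently, c · g = 0 in R[[Γ]]). -/

import Mathlib

/-- A ring is *abelian* if every idempotent is central. -/
def IsAbelianRing (R : Type*) [Ring R] : Prop :=
  ∀ e : R, IsIdempotentElem e → ∀ a : R, e * a = a * e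

/-- A ring `R` is *semi-regular* if `R/J(R)` is von Neumann regular (for every `a` there is
`b` with `a - a*b*a ∈ J(R)`) and idempotents lift modulo the Jacobson radical `J(R)`. -/
def IsSemiregularRing (R : Type*) [Ring R] : Prop :=
  (∀ a : R, ∃ b : R, a - a * b * a ∈ (⊥ : Ideal R).jacobson) ∧
  ∀ a : R, a * a - a ∈ (⊥ : Ideal R).jacobson →
    ∃ e : R, IsIdempotentElem e ∧ e - a ∈ (⊥ : Ideal R).jacobson

/-- The Jacobson radical `J(R)` is nilpotent: there is `n > 0` such that every product of `n`
elements of `J(R)` vanishes (i.e. `J(R)^n = 0`). -/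
def JacobsonNilpotent (R : Type*) [Ring R] : Prop :=
  ∃ n : ℕ, 0 < n ∧ ∀ l : List R, l.length = n →
    (∀ x ∈ l, x ∈ (⊥ : Ideal R).jacobson) → l.prod = 0

section Aux

variable {R : Type*} [Ring R]

/-- Every element of the Jacobson radical has `1 - j` left-invertible. -/
theorem jac_exists_left_inv {j : R} (hj : j ∈ (⊥ : Ideal R).jacobson) : ∃ u : R, u * (1 - j) = 1 := by
  by_contra h
  push_neg at h
  have hne : Ideal.span {(1 : R) - j} ≠ ⊤ := by
    intro htop
    have h1 : (1 : R) ∈ Ideal.span {(1 : R) - j} := htop ▸ Submodule.mem_top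
    rw [Ideal.span, Submodule.mem_span_singleton] at h1
    obtain ⟨u, hu⟩ := h1
    exact h u (by simpa [smul_eq_mul] using hu)
  obtain ⟨M, hM, hle⟩ := Ideal.exists_le_maximal _ hne
  have hjM : j ∈ M := by
    have hJM : (⊥ : Ideal R).jacobson ≤ M := sInf_le ⟨bot_le, hM⟩
    exact hJM hj
  have h1j : (1 : R) - j ∈ M := hle (Ideal.subset_span rfl)
  exact hM.ne_top ((Ideal.eq_top_iff_one M).2 (by simpa using M.add_mem h1j hjM))

theorem jac_isUnit_one_sub {j : R} (hj : j ∈ (⊥ : Ideal R).jacobson) : IsUnit (1 - j) := by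
  obtain ⟨u, hu⟩ := jac_exists_left_inv hj
  have hj' : -(u * j) ∈ (⊥ : Ideal R).jacobson := neg_mem (Ideal.mul_mem_left _ u hj)
  have hu' : u = 1 - -(u * j) := by
    have h1 : u - u * j = 1 := by rw [mul_sub, mul_one] at hu; exact hu
    rw [sub_neg_eq_add]
    exact sub_eq_iff_eq_add.1 h1
  obtain ⟨t, ht⟩ := jac_exists_left_inv hj'
  rw [← hu'] at ht
  have htj : t = 1 - j := by
    calc t = t * (u * (1 - j)) := by rw [hu, mul_one]
    _ = (t * u) * (1 - j) := by rw [mul_assoc]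
    _ = 1 - j := by rw [ht, one_mul]
  refine ⟨⟨1 - j, u, ?_, hu⟩, rfl⟩
  rw [← htj]; exact ht

theorem jac_mul_right {x : R} (hx : x ∈ (⊥ : Ideal R).jacobson) (r : R) : x * r ∈ (⊥ : Ideal R).jacobson := by
  rw [Ideal.jacobson, Submodule.mem_sInf]
  rintro M ⟨-, hM⟩
  by_contra hxr
  have h1 : M ⊔ Ideal.span {x * r} = ⊤ := by
    rcases eq_or_lt_of_le (le_sup_left : M ≤ M ⊔ Ideal.span {x * r}) with heq | hlt
    · have hmem2 : x * r ∈ M ⊔ Ideal.span {x * r} :=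
        Submodule.mem_sup_right (Ideal.subset_span rfl)
      exact absurd (heq ▸ hmem2) hxr
    · exact hM.1.2 _ hlt
  have h1' : (1 : R) ∈ M ⊔ Ideal.span {x * r} := h1 ▸ Submodule.mem_top
  obtain ⟨y, hy, z, hz, hyz⟩ := Submodule.mem_sup.1 h1'
  obtain ⟨t, ht⟩ := Submodule.mem_span_singleton.1 hz
  rw [smul_eq_mul] at ht
  have hx' : (r * t) * x ∈ (⊥ : Ideal R).jacobson := Ideal.mul_mem_left _ (r * t) hx
  obtain ⟨V, hV⟩ := jac_isUnit_one_sub hx'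
  have hkey : (1 - (r * t) * x) * r = r * y := by
    have h2 : r * y + r * (t * (x * r)) = r := by
      rw [← ht] at hyz
      calc r * y + r * (t * (x * r)) = r * (y + t * (x * r)) := by rw [mul_add]
      _ = r := by rw [hyz, mul_one]
    have h3 : (1 - (r * t) * x) * r = r - r * (t * (x * r)) := by noncomm_ring
    rw [h3]
    exact (eq_sub_of_add_eq h2).symm
  have hrM : r ∈ M := by
    have hr2 : r = ↑V⁻¹ * (r * y) := by
      rw [← hkey, ← hV, ← mul_assoc, Units.inv_mul, one_mul]
    rw [hr2]
    exact Ideal.mul_mem_left _ _ (Ideal.mul_mem_left _ _ hy)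
  apply hM.ne_top
  rw [Ideal.eq_top_iff_one, ← hyz, ← ht]
  refine M.add_mem hy ?_
  have h5 : t * (x * r) = (t * x) * r := by rw [mul_assoc]
  rw [h5]
  exact Ideal.mul_mem_left _ _ hrM

/-- `jacPow R k` : additive/left-multiplicative closure of products `y * j₁ * ⋯ * jₖ`
with each `jᵢ ∈ J(R)`. -/
def jacPow (R : Type*) [Ring R] : ℕ → Ideal R
  | 0 => ⊤
  | (k+1) => Ideal.span {x : R | ∃ y j : R, y ∈ jacPow R k ∧ j ∈ (⊥ : Ideal R).jacobson ∧ x = y * j}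

theorem mem_jacPow_succ {k : ℕ} {y j : R} (hy : y ∈ jacPow R k) (hj : j ∈ (⊥ : Ideal R).jacobson) :
    y * j ∈ jacPow R (k + 1) :=
  Ideal.subset_span ⟨y, j, hy, hj, rfl⟩

theorem jacPow_mul_right : ∀ (k : ℕ) {x : R}, x ∈ jacPow R k → ∀ r : R, x * r ∈ jacPow R k := by
  intro k
  induction k with
  | zero => intro x _ r; exact Submodule.mem_top
  | succ k _ =>
    intro x hx r
    refine Submodule.span_induction (p := fun x _ => x * r ∈ jacPow R (k + 1)) ?_ ?_ ?_ ?_ hx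
    · rintro x ⟨y, j, hy, hj, rfl⟩
      show (y * j) * r ∈ jacPow R (k + 1)
      rw [mul_assoc]
      exact mem_jacPow_succ hy (jac_mul_right hj r)
    · show (0 : R) * r ∈ jacPow R (k + 1)
      rw [zero_mul]; exact zero_mem _
    · intro a b _ _ ha hb
      show (a + b) * r ∈ jacPow R (k + 1)
      rw [add_mul]; exact add_mem ha hb
    · intro a b _ hb
      show (a • b) * r ∈ jacPow R (k + 1)
      rw [smul_eq_mul, mul_assoc]; exact Ideal.mul_mem_left _ _ hb

theorem jacPow_prod (n : ℕ)
    (hnl : ∀ l : List R, l.length = n → (∀ x ∈ l, x ∈ (⊥ : Ideal R).jacobson) → l.prod = 0) :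
    ∀ (k : ℕ) (x : R), x ∈ jacPow R k → ∀ l : List R, (∀ y ∈ l, y ∈ (⊥ : Ideal R).jacobson) →
      l.length + k = n → x * l.prod = 0 := by
  intro k
  induction k with
  | zero =>
    intro x _ l hl hlen
    rw [hnl l (by simpa using hlen) hl, mul_zero]
  | succ k ih =>
    intro x hx
    refine Submodule.span_induction
      (p := fun x _ => ∀ l : List R, (∀ y ∈ l, y ∈ (⊥ : Ideal R).jacobson) → l.length + (k+1) = n → x * l.prod = 0)
      ?_ ?_ ?_ ?_ hx
    · rintro x ⟨y, j, hy, hj, rfl⟩ l hl hlen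
      show (y * j) * l.prod = 0
      have h1 : (y * j) * l.prod = y * (j :: l).prod := by
        rw [List.prod_cons, mul_assoc]
      rw [h1]
      refine ih y hy (j :: l) ?_ ?_
      · intro z hz
        rcases List.mem_cons.1 hz with h | h
        · exact h ▸ hj
        · exact hl z h
      · simp only [List.length_cons]; omega
    · intro l _ _
      show (0 : R) * l.prod = 0
      rw [zero_mul]
    · intro a b _ _ ha hb l hl hlen
      show (a + b) * l.prod = 0
      rw [add_mul, ha l hl hlen, hb l hl hlen, add_zero]
    · intro a b _ hb l hl hlen
      show (a • b) * l.prod = 0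
      rw [smul_eq_mul, mul_assoc, hb l hl hlen, mul_zero]

theorem jacPow_n_zero (n : ℕ)
    (hnl : ∀ l : List R, l.length = n → (∀ x ∈ l, x ∈ (⊥ : Ideal R).jacobson) → l.prod = 0)
    {x : R} (hx : x ∈ jacPow R n) : x = 0 := by
  have h := jacPow_prod n hnl n x hx [] (by simp) (by simp)
  simpa using h

/-- Decomposition of an arbitrary element as `unit * central idempotent + radical`,
with the idempotent chosen to be `0` when the element is `0`. -/
theorem jac_decompose (hab : IsAbelianRing R) (hsr : IsSemiregularRing R) (a : R) :
    ∃ e w jj : R, IsIdempotentElem e ∧ IsUnit w ∧ jj ∈ (⊥ : Ideal R).jacobson ∧ a = w * e + jj ∧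
      (a = 0 → e = 0) := by
  by_cases ha0 : a = 0
  · exact ⟨0, 1, 0, IsIdempotentElem.zero, isUnit_one, zero_mem _, by simp [ha0], fun _ => rfl⟩
  obtain ⟨b, hb⟩ := hsr.1 a
  have hb' : a * b * a - a ∈ (⊥ : Ideal R).jacobson := by
    have h := neg_mem hb
    rwa [neg_sub] at h
  have h1 : (a * b) * (a * b) - a * b ∈ (⊥ : Ideal R).jacobson := by
    have h := jac_mul_right (neg_mem hb) b
    have heq : (a * b) * (a * b) - a * b = (-(a - a * b * a)) * b := by noncomm_ring
    rwa [heq]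
  obtain ⟨e, he, hea⟩ := hsr.2 (a * b) h1
  have hec : ∀ x : R, e * x = x * e := hab e he
  have m1 : (e * a) * e = e * a := by
    rw [mul_assoc, ← hec a, ← mul_assoc, he]
  have m2 : (e * b) * e = e * b := by
    rw [mul_assoc, ← hec b, ← mul_assoc, he]
  have p4 : (e * a) * (e * b) = (a * b) * e := by
    calc (e * a) * (e * b) = ((e * a) * e) * b := by noncomm_ring
    _ = (e * a) * b := by rw [m1]
    _ = e * (a * b) := by rw [mul_assoc]
    _ = (a * b) * e := hec (a * b)
  have q4 : (e * b) * (e * a) = (b * a) * e := by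
    calc (e * b) * (e * a) = ((e * b) * e) * a := by noncomm_ring
    _ = (e * b) * a := by rw [m2]
    _ = e * (b * a) := by rw [mul_assoc]
    _ = (b * a) * e := hec (b * a)
  have hwv1 : (e * a + 1 - e) * (e * b + 1 - e) = (a * b) * e + (1 - e) := by
    have hexp : (e * a + 1 - e) * (e * b + 1 - e)
        = (e * a) * (e * b) + ((e * a) - (e * a) * e) + ((e * b) - e * (e * b))
          + (1 - e - e + e * e) := by noncomm_ring
    have h2 : e * (e * b) = e * b := by rw [← mul_assoc, he]
    rw [hexp, m1, p4, h2, he]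
    noncomm_ring
  have hvw1 : (e * b + 1 - e) * (e * a + 1 - e) = (b * a) * e + (1 - e) := by
    have hexp : (e * b + 1 - e) * (e * a + 1 - e)
        = (e * b) * (e * a) + ((e * b) - (e * b) * e) + ((e * a) - e * (e * a))
          + (1 - e - e + e * e) := by noncomm_ring
    have h2 : e * (e * a) = e * a := by rw [← mul_assoc, he]
    rw [hexp, m2, q4, h2, he]
    noncomm_ring
  have hB0 : e - (a * b) * e ∈ (⊥ : Ideal R).jacobson := by
    have h := jac_mul_right hea e
    have heq : (e - a * b) * e = e - (a * b) * e := by rw [sub_mul, he]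
    rwa [heq] at h
  have hwv : (e * a + 1 - e) * (e * b + 1 - e) - 1 ∈ (⊥ : Ideal R).jacobson := by
    have heq : (e * a + 1 - e) * (e * b + 1 - e) - 1 = -(e - (a * b) * e) := by
      rw [hwv1]; noncomm_ring
    rw [heq]; exact neg_mem hB0
  -- the harder congruence : (b*a)*e ≡ e mod (⊥ : Ideal R).jacobson
  have hqq : ((b * a) * e) * ((b * a) * e) - (b * a) * e ∈ (⊥ : Ideal R).jacobson := by
    have hqq_eq : ((b * a) * e) * ((b * a) * e) = ((b * a) * (b * a)) * e := by
      calc ((b * a) * e) * ((b * a) * e) = (b * a) * ((e * (b * a)) * e) := by noncomm_ring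
      _ = (b * a) * (((b * a) * e) * e) := by rw [hec (b * a)]
      _ = (b * a) * ((b * a) * (e * e)) := by noncomm_ring
      _ = (b * a) * ((b * a) * e) := by rw [he]
      _ = ((b * a) * (b * a)) * e := by noncomm_ring
    have heq : ((b * a) * e) * ((b * a) * e) - (b * a) * e = (b * ((a * b * a) - a)) * e := by
      rw [hqq_eq]; noncomm_ring
    rw [heq]
    exact jac_mul_right (Ideal.mul_mem_left _ b hb') e
  obtain ⟨e2, he2, he2q⟩ := hsr.2 ((b * a) * e) hqq
  have he2c : ∀ x : R, e2 * x = x * e2 := hab e2 he2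
  have hA : (e * a) * e2 - e * a ∈ (⊥ : Ideal R).jacobson := by
    have t1 : (e * a) * (e2 - (b * a) * e) ∈ (⊥ : Ideal R).jacobson := Ideal.mul_mem_left _ _ he2q
    have t2 : (e * ((a * b * a) - a)) * e ∈ (⊥ : Ideal R).jacobson :=
      jac_mul_right (Ideal.mul_mem_left _ e hb') e
    have hid : (e * a) * e2 - (e * a) * e
        = (e * a) * (e2 - (b * a) * e) + (e * ((a * b * a) - a)) * e := by noncomm_ring
    have h := add_mem t1 t2
    rw [← hid] at h
    rwa [m1] at h
  have h2' : e2 * ((a * b) * e) - (a * b) * e ∈ (⊥ : Ideal R).jacobson := by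
    have t1 : ((e * a) * e2 - e * a) * (e * b) ∈ (⊥ : Ideal R).jacobson := jac_mul_right hA _
    have hid : ((e * a) * e2 - e * a) * (e * b)
        = ((e * a) * e2) * (e * b) - (e * a) * (e * b) := by noncomm_ring
    rw [hid, p4] at t1
    have hA3 : ((e * a) * e2) * (e * b) = e2 * ((a * b) * e) := by
      rw [← he2c (e * a), mul_assoc, p4]
    rwa [hA3] at t1
  have h3 : e2 * e - e2 * ((a * b) * e) ∈ (⊥ : Ideal R).jacobson := by
    have h := Ideal.mul_mem_left _ e2 hB0
    rwa [mul_sub] at h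
  have h4 : e2 * e - (b * a) * e ∈ (⊥ : Ideal R).jacobson := by
    have h := jac_mul_right he2q e
    have hid : (e2 - (b * a) * e) * e = e2 * e - (b * a) * e := by
      rw [sub_mul, mul_assoc, he]
    rwa [hid] at h
  have hfinal : e - (b * a) * e ∈ (⊥ : Ideal R).jacobson := by
    have heq : e - (b * a) * e = ((e - (a * b) * e) + -(e2 * ((a * b) * e) - (a * b) * e)
        + -(e2 * e - e2 * ((a * b) * e))) + (e2 * e - (b * a) * e) := by abel
    rw [heq]
    exact add_mem (add_mem (add_mem hB0 (neg_mem h2')) (neg_mem h3)) h4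
  have hvw : (e * b + 1 - e) * (e * a + 1 - e) - 1 ∈ (⊥ : Ideal R).jacobson := by
    have heq : (e * b + 1 - e) * (e * a + 1 - e) - 1 = -(e - (b * a) * e) := by
      rw [hvw1]; noncomm_ring
    rw [heq]; exact neg_mem hfinal
  set w := e * a + 1 - e with hw
  set v := e * b + 1 - e with hv
  have hu1 : IsUnit (w * v) := by
    have h : (1 : R) - w * v ∈ (⊥ : Ideal R).jacobson := by
      have := neg_mem hwv
      rwa [neg_sub] at this
    have := jac_isUnit_one_sub h
    rwa [sub_sub_cancel] at this
  have hu2 : IsUnit (v * w) := by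
    have h : (1 : R) - v * w ∈ (⊥ : Ideal R).jacobson := by
      have := neg_mem hvw
      rwa [neg_sub] at this
    have := jac_isUnit_one_sub h
    rwa [sub_sub_cancel] at this
  obtain ⟨U, hU⟩ := hu1
  obtain ⟨T, hT⟩ := hu2
  have hright : w * (v * ↑U⁻¹) = 1 := by
    rw [← mul_assoc, show w * v = (U : R) from hU.symm]
    exact Units.mul_inv U
  have hleft : ((↑T⁻¹ : R) * v) * w = 1 := by
    rw [mul_assoc, show v * w = (T : R) from hT.symm]
    exact Units.inv_mul T
  have hcd : v * ↑U⁻¹ = (↑T⁻¹ : R) * v := by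
    calc v * ↑U⁻¹ = (((↑T⁻¹ : R) * v) * w) * (v * ↑U⁻¹) := by rw [hleft, one_mul]
    _ = ((↑T⁻¹ : R) * v) * (w * (v * ↑U⁻¹)) := by rw [mul_assoc]
    _ = (↑T⁻¹ : R) * v := by rw [hright, mul_one]
  have hwu : IsUnit w := ⟨⟨w, v * ↑U⁻¹, hright, by rw [hcd]; exact hleft⟩, rfl⟩
  have hwe : w * e = e * a := by
    have hexp : (e * a + 1 - e) * e = (e * a) * e + (e - e * e) := by noncomm_ring
    rw [hw, hexp, m1, he]
    noncomm_ring
  have hjj : a - w * e ∈ (⊥ : Ideal R).jacobson := by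
    rw [hwe]
    have hid : a - e * a = (a - a * b * a) + -((e - a * b) * a) := by noncomm_ring
    rw [hid]
    exact add_mem hb (neg_mem (jac_mul_right hea a))
  exact ⟨e, w, a - w * e, he, hwu, hjj, by abel, fun h => absurd h ha0⟩

end Aux

/-- Let `Γ` be a linearly ordered, cancellative, strictly monotone additive commutative
monoid and `R` an abelian semi-regular ring with `J(R)` nilpotent.  Then the Hahn series
ring `R[[Γ]]` is left McCoy over `R`: if `f * g = 0` with `f, g ≠ 0`, then some non-zero
`c ∈ R` annihilates every coefficient of `g` on the left. -/
theorem hahnSeries_left_mccoy (Γ R : Type*)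
    [AddCommMonoid Γ] [LinearOrder Γ] [IsOrderedCancelAddMonoid Γ] [Ring R]
    (hab : IsAbelianRing R) (hsr : IsSemiregularRing R) (hnil : JacobsonNilpotent R)
    (f g : HahnSeries Γ R) (hf : f ≠ 0) (hg : g ≠ 0) (hfg : f * g = 0) :
    ∃ c : R, c ≠ 0 ∧ ∀ s : Γ, c * g.coeff s = 0 := by
  classical
  obtain ⟨n, hn0, hnl⟩ := hnil
  obtain ⟨u0, hu0⟩ : ∃ u0, f.coeff u0 ≠ 0 := by
    obtain ⟨u0, hu0⟩ := HahnSeries.support_nonempty_iff.2 hf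
    exact ⟨u0, hu0⟩
  choose E W Jv hE hW hJv hgv hE0 using fun v : Γ => jac_decompose hab hsr (g.coeff v)
  have hEc : ∀ (v : Γ) (x : R), E v * x = x * E v := fun v => hab (E v) (hE v)
  -- Universal lemma : every coefficient of `f` kills every idempotent part of `g`.
  have main : ∀ k : ℕ, ∀ v u : Γ, f.coeff u * E v ∈ jacPow R k := by
    intro k
    induction k with
    | zero => intro v u; exact Submodule.mem_top
    | succ k ihk =>
      intro v
      by_cases hv : v ∈ g.support
      case neg =>
        intro u
        have hg0 : g.coeff v = 0 := by
          by_contra hne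
          exact hv ((HahnSeries.mem_support g v).2 hne)
        rw [hE0 v hg0, mul_zero]
        exact zero_mem _
      case pos =>
        refine Set.WellFoundedOn.induction
          (P := fun v => ∀ u : Γ, f.coeff u * E v ∈ jacPow R (k + 1))
          g.isWF_support hv ?_
        intro v hv ihv
        intro u
        by_cases hu : u ∈ f.support
        case neg =>
          have hf0 : f.coeff u = 0 := by
            by_contra hne
            exact hu ((HahnSeries.mem_support f u).2 hne)
          rw [hf0, zero_mul]
          exact zero_mem _
        case pos =>
          refine Set.WellFoundedOn.induction
            (P := fun u => f.coeff u * E v ∈ jacPow R (k + 1))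
            f.isWF_support hu ?_
          intro u hu ihu
          -- the coefficient equation at u + v
          have hzero : ∑ ij ∈ Finset.addAntidiagonal f.isPWO_support g.isPWO_support (u + v),
              f.coeff ij.1 * g.coeff ij.2 = 0 := by
            have h := HahnSeries.coeff_mul (x := f) (y := g) (a := u + v)
            rw [hfg, HahnSeries.coeff_zero] at h
            exact h.symm
          have hzero2 : ∑ ij ∈ Finset.addAntidiagonal f.isPWO_support g.isPWO_support (u + v),
              (f.coeff ij.1 * g.coeff ij.2) * E v = 0 := by
            rw [← Finset.sum_mul, hzero, zero_mul]
          have hmemS : ((u, v) : Γ × Γ) ∈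
              Finset.addAntidiagonal f.isPWO_support g.isPWO_support (u + v) :=
            Finset.mem_addAntidiagonal.2 ⟨hu, hv, rfl⟩
          have hrest : ∀ ij ∈ (Finset.addAntidiagonal f.isPWO_support g.isPWO_support
              (u + v)).erase (u, v),
              (f.coeff ij.1 * g.coeff ij.2) * E v ∈ jacPow R (k + 1) := by
            rintro ⟨u', v'⟩ hij
            obtain ⟨hne, hmem⟩ := Finset.mem_erase.1 hij
            obtain ⟨hu', hv', hsum⟩ := Finset.mem_addAntidiagonal.1 hmem
            rcases lt_trichotomy v' v with hlt | heqv | hgt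
            · -- v' < v : use outer induction hypothesis
              have h1 : f.coeff u' * E v' ∈ jacPow R (k + 1) := ihv v' hv' hlt u'
              have hterm : (f.coeff u' * g.coeff v') * E v
                  = ((f.coeff u' * E v') * (W v' * E v)) + ((f.coeff u' * E v) * Jv v') := by
                rw [hgv v']
                have c1 : W v' * E v' = E v' * W v' := (hEc v' (W v')).symm
                calc (f.coeff u' * (W v' * E v' + Jv v')) * E v
                    = (f.coeff u' * (W v' * E v')) * E v + f.coeff u' * (Jv v' * E v) := by
                      noncomm_ring
                _ = (f.coeff u' * (E v' * W v')) * E v + f.coeff u' * (E v * Jv v') := by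
                      rw [c1, ← hEc v (Jv v')]
                _ = _ := by noncomm_ring
              rw [hterm]
              exact add_mem (jacPow_mul_right (k + 1) h1 _)
                (mem_jacPow_succ (ihk v u') (hJv v'))
            · -- v' = v : contradiction with (u', v') ≠ (u, v)
              exfalso
              apply hne
              subst heqv
              have : u' = u := add_right_cancel hsum
              rw [this]
            · -- v' > v : then u' < u, use inner induction hypothesis
              have hult : u' < u := by
                by_contra hge
                push_neg at hge
                have hltsum : u + v < u' + v' := add_lt_add_of_le_of_lt hge hgt
                rw [hsum] at hltsum
                exact lt_irrefl _ hltsum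
              have h1 : f.coeff u' * E v ∈ jacPow R (k + 1) := ihu u' hu' hult
              have hterm : (f.coeff u' * g.coeff v') * E v
                  = ((f.coeff u' * E v) * (W v' * E v')) + ((f.coeff u' * E v) * Jv v') := by
                rw [hgv v']
                calc (f.coeff u' * (W v' * E v' + Jv v')) * E v
                    = f.coeff u' * ((W v' * E v') * E v) + f.coeff u' * (Jv v' * E v) := by
                      noncomm_ring
                _ = f.coeff u' * (E v * (W v' * E v')) + f.coeff u' * (E v * Jv v') := by
                      rw [← hEc v (W v' * E v'), ← hEc v (Jv v')]
                _ = _ := by noncomm_ring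
              rw [hterm]
              exact add_mem (jacPow_mul_right (k + 1) h1 _)
                (mem_jacPow_succ (ihk v u') (hJv v'))
          have hkey : (f.coeff u * g.coeff v) * E v ∈ jacPow R (k + 1) := by
            have h := Finset.add_sum_erase _
              (fun ij : Γ × Γ => (f.coeff ij.1 * g.coeff ij.2) * E v) hmemS
            rw [hzero2] at h
            have heq : (f.coeff u * g.coeff v) * E v
                = -∑ ij ∈ (Finset.addAntidiagonal f.isPWO_support g.isPWO_support
                    (u + v)).erase (u, v), (f.coeff ij.1 * g.coeff ij.2) * E v :=
              eq_neg_of_add_eq_zero_left h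
            rw [heq]
            exact neg_mem (Submodule.sum_mem _ hrest)
          have hsplit : (f.coeff u * g.coeff v) * E v
              = (f.coeff u * (W v * E v)) + ((f.coeff u * E v) * Jv v) := by
            rw [hgv v]
            calc (f.coeff u * (W v * E v + Jv v)) * E v
                = f.coeff u * (W v * (E v * E v)) + f.coeff u * (Jv v * E v) := by
                  noncomm_ring
            _ = f.coeff u * (W v * E v) + f.coeff u * (E v * Jv v) := by
                  rw [hE v, ← hEc v (Jv v)]
            _ = _ := by noncomm_ring
          have hwE : f.coeff u * (W v * E v) ∈ jacPow R (k + 1) := by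
            have h2 : (f.coeff u * E v) * Jv v ∈ jacPow R (k + 1) :=
              mem_jacPow_succ (ihk v u) (hJv v)
            have h3 := sub_mem (hsplit ▸ hkey) h2
            simpa using h3
          obtain ⟨Wu, hWu⟩ := hW v
          have hfin : (f.coeff u * (↑Wu * E v)) * ↑Wu⁻¹ = f.coeff u * E v := by
            calc (f.coeff u * (↑Wu * E v)) * ↑Wu⁻¹
                = f.coeff u * (↑Wu * (E v * ↑Wu⁻¹)) := by noncomm_ring
            _ = f.coeff u * (↑Wu * (↑Wu⁻¹ * E v)) := by rw [hEc v (↑Wu⁻¹ : R)]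
            _ = f.coeff u * ((↑Wu * ↑Wu⁻¹) * E v) := by noncomm_ring
            _ = f.coeff u * E v := by rw [Units.mul_inv, one_mul]
          rw [← hfin]
          exact jacPow_mul_right (k + 1) (by rw [hWu]; exact hwE) _
  have huniv : ∀ u v : Γ, f.coeff u * E v = 0 := fun u v =>
    jacPow_n_zero n hnl (main n v u)
  -- maximal length of a non-vanishing right product
  set P : ℕ → Prop := fun k => ∃ (u : Γ) (l : List R),
    (∀ y ∈ l, y ∈ (⊥ : Ideal R).jacobson) ∧ l.length = k ∧ f.coeff u * l.prod ≠ 0 with hP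
  have hP0 : P 0 := ⟨u0, [], by simp, rfl, by simpa using hu0⟩
  have hPbound : ∀ k, P k → k < n := by
    rintro k ⟨u', l, hl, hlen, hne⟩
    by_contra hge
    push_neg at hge
    apply hne
    have hprod : l.prod = 0 := by
      have htake : (l.take n).prod = 0 := by
        refine hnl _ ?_ ?_
        · rw [List.length_take, hlen]; exact min_eq_left hge
        · intro y hy; exact hl y (List.mem_of_mem_take hy)
      conv_lhs => rw [← List.take_append_drop n l]
      rw [List.prod_append, htake, zero_mul]
    rw [hprod, mul_zero]
  have hPm : P (Nat.findGreatest P n) := Nat.findGreatest_spec (Nat.zero_le n) hP0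
  obtain ⟨u1, l1, hl1, hlen1, hc⟩ := hPm
  refine ⟨f.coeff u1 * l1.prod, hc, ?_⟩
  intro s
  have hnot : ∀ (u' : Γ) (l' : List R), (∀ y ∈ l', y ∈ (⊥ : Ideal R).jacobson) →
      l'.length = Nat.findGreatest P n + 1 → f.coeff u' * l'.prod = 0 := by
    intro u' l' hl' hlen'
    by_contra hne
    have hPk : P (Nat.findGreatest P n + 1) := ⟨u', l', hl', hlen', hne⟩
    have hlt : Nat.findGreatest P n < n :=
      hPbound _ (Nat.findGreatest_spec (Nat.zero_le n) hP0)
    exact Nat.findGreatest_is_greatest (Nat.lt_succ_self _) (by omega) hPk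
  rw [hgv s]
  have h1 : (f.coeff u1 * l1.prod) * (W s * E s) = 0 := by
    calc (f.coeff u1 * l1.prod) * (W s * E s)
        = f.coeff u1 * ((l1.prod * W s) * E s) := by noncomm_ring
    _ = f.coeff u1 * (E s * (l1.prod * W s)) := by rw [← hEc s (l1.prod * W s)]
    _ = (f.coeff u1 * E s) * (l1.prod * W s) := by noncomm_ring
    _ = 0 := by rw [huniv u1 s, zero_mul]
  have h2 : (f.coeff u1 * l1.prod) * Jv s = 0 := by
    have heq : (f.coeff u1 * l1.prod) * Jv s = f.coeff u1 * (l1 ++ [Jv s]).prod := by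
      rw [List.prod_append, List.prod_cons, List.prod_nil, mul_one, mul_assoc]
    rw [heq]
    refine hnot u1 (l1 ++ [Jv s]) ?_ ?_
    · intro y hy
      rcases List.mem_append.1 hy with h | h
      · exact hl1 y h
      · rw [List.mem_singleton.1 h]; exact hJv s
    · rw [List.length_append, hlen1]; simp
  rw [mul_add, h1, h2, add_zero]
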